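/- Let G be a graph with weight function w, and suppose G has no generating subgraph at all. Then G is w-well-covered for every weight function w; in particular, G has a unique maximal independent set or all maximal independent sets coincide in weight for all w only if every two maximal independent sets are equal. -/

import Mathlib

open SimpleGraph Set

variable {V : Type*} [Fintype V] [DecidableEq V]

/-- `N_i(S)`: vertices whose minimum distance to the set `S` equals `i`. -/
def NSet (G : SimpleGraph V) (i : ℕ) (S : Set V) : Set V :=
  {u | (⨅ s ∈ S, G.edist s u) = (i : ℕ∞)}

/-- `N_i(x)`: vertices at distance exactly `i` from `x`. -/
def Nv (G : SimpleGraph V) (i : ℕ) (x : V) : Set V := {u | G.edist x u = (i : ℕ∞)}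

/-- `S` is an independent set of `G`. -/
def IsIndep (G : SimpleGraph V) (S : Set V) : Prop :=
  S.Pairwise fun u v => ¬ G.Adj u v

/-- `A` dominates `T`. -/
def Dominates (G : SimpleGraph V) (A T : Set V) : Prop :=
  T ⊆ A ∪ {u | ∃ a ∈ A, G.Adj a u}

/-- `S` is a maximal independent set of `G`. -/
def IsMaxIndep (G : SimpleGraph V) (S : Set V) : Prop :=
  IsIndep G S ∧ ∀ T, IsIndep G T → S ⊆ T → T = S

/-- The induced subgraph on `X ∪ Y` is complete bipartite with parts `X`, `Y`. -/
def IsCompBipartite (G : SimpleGraph V) (X Y : Set V) : Prop :=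
  X.Nonempty ∧ Y.Nonempty ∧ Disjoint X Y ∧ IsIndep G X ∧ IsIndep G Y ∧
    ∀ x ∈ X, ∀ y ∈ Y, G.Adj x y

/-- `B = (X, Y)` is a generating subgraph of `G`. -/
def Generating (G : SimpleGraph V) (X Y : Set V) : Prop :=
  IsCompBipartite G X Y ∧ ∃ S : Set V, IsIndep G S ∧ Disjoint S (X ∪ Y) ∧
    IsMaxIndep G (S ∪ X) ∧ IsMaxIndep G (S ∪ Y)

/-- `G` contains a (not necessarily induced) cycle on `k` vertices. -/
def HasCycle (G : SimpleGraph V) (k : ℕ) : Prop :=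
  ∃ f : ZMod k → V, Function.Injective f ∧ ∀ i, G.Adj (f i) (f (i + 1))

/-- Weight of a set of vertices. -/
noncomputable def wt (w : V → ℝ) (S : Set V) : ℝ := ∑ x ∈ S.toFinite.toFinset, w x

/-- `G` is `w`-well-covered. -/
def WWellCovered (G : SimpleGraph V) (w : V → ℝ) : Prop :=
  ∀ S T : Set V, IsMaxIndep G S → IsMaxIndep G T → wt w S = wt w T


set_option linter.unusedSectionVars false in
lemma extend_indep (G : SimpleGraph V) {I : Set V} (hI : IsIndep G I) :
    ∃ M : Set V, IsMaxIndep G M ∧ I ⊆ M := by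
  obtain ⟨M, ⟨hMi, hIM⟩, hmax⟩ :=
    Set.exists_max_image {T | IsIndep G T ∧ I ⊆ T} Set.ncard
      (Set.toFinite _) ⟨I, hI, subset_rfl⟩
  refine ⟨M, ⟨hMi, fun T hT hMT => ?_⟩, hIM⟩
  exact (Set.eq_of_subset_of_ncard_le hMT (hmax T ⟨hT, hIM.trans hMT⟩)
    (Set.toFinite _)).symm

set_option linter.unusedSectionVars false in
lemma unique_max_indep (G : SimpleGraph V)
    (h : ¬ ∃ X Y : Set V, Generating G X Y) :
    ∀ S T : Set V, IsMaxIndep G S → IsMaxIndep G T → S = T := by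
  intro S₀ T hS₀ hT
  by_contra hne
  -- choose S maximizing |S ∩ T| among maximal independent sets ≠ T
  obtain ⟨S, ⟨hS, hST⟩, hmax⟩ :=
    Set.exists_max_image {S | IsMaxIndep G S ∧ S ≠ T} (fun S => (S ∩ T).ncard)
      (Set.toFinite _) ⟨S₀, hS₀, hne⟩
  set X : Set V := S \ T with hX
  set Y : Set V := T \ S with hY
  set R : Set V := S ∩ T with hR
  have hXne : X.Nonempty := by
    rw [Set.diff_nonempty]
    intro hsub
    exact hST (hS.2 T hT.1 hsub).symm
  have hYne : Y.Nonempty := by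
    rw [Set.diff_nonempty]
    intro hsub
    exact hST (hT.2 S hS.1 hsub)
  -- key claim: complete bipartite
  have key : ∀ x ∈ X, ∀ y ∈ Y, G.Adj x y := by
    intro x hx y hy
    by_contra hadj
    set I : Set V := (S \ {u | G.Adj y u}) ∪ {y} with hIdef
    have hyS : y ∉ S := hy.2
    have hIindep : IsIndep G I := by
      intro u hu v hv huv
      rcases hu with hu | hu <;> rcases hv with hv | hv
      · exact hS.1 hu.1 hv.1 huv
      · rw [Set.mem_singleton_iff] at hv; subst hv
        exact fun hA => hu.2 hA.symm
      · rw [Set.mem_singleton_iff] at hu; subst hu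
        exact hv.2
      · rw [Set.mem_singleton_iff] at hu hv; exact absurd (hu.trans hv.symm) huv
    obtain ⟨M, hM, hIM⟩ := extend_indep G hIindep
    have hxI : x ∈ I := Or.inl ⟨hx.1, fun hA => hadj hA.symm⟩
    have hMT : M ≠ T := fun hEq => hx.2 (hEq ▸ hIM hxI)
    have hle : (M ∩ T).ncard ≤ (S ∩ T).ncard := hmax M ⟨hM, hMT⟩
    have hsub : insert y (S ∩ T) ⊆ M ∩ T := by
      intro r hr
      rcases Set.mem_insert_iff.mp hr with hr | hr
      · subst hr; exact ⟨hIM (Or.inr rfl), hy.1⟩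
      · refine ⟨hIM (Or.inl ⟨hr.1, fun hA => ?_⟩), hr.2⟩
        exact hT.1 hy.1 hr.2 (fun hEq => hyS (hEq ▸ hr.1)) hA
    have hnot : y ∉ S ∩ T := fun hmem => hyS hmem.1
    have : (S ∩ T).ncard + 1 ≤ (M ∩ T).ncard := by
      rw [← Set.ncard_insert_of_notMem hnot (Set.toFinite _)]
      exact Set.ncard_le_ncard hsub (Set.toFinite _)
    omega
  -- build the generating subgraph
  refine h ⟨X, Y, ⟨hXne, hYne, ?_, ?_, ?_, key⟩, R, ?_, ?_, ?_, ?_⟩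
  · exact Set.disjoint_left.mpr fun a ha hb => hb.2 ha.1
  · exact hS.1.mono Set.diff_subset
  · exact hT.1.mono Set.diff_subset
  · exact hS.1.mono Set.inter_subset_left
  · refine Set.disjoint_left.mpr fun a ha hb => ?_
    rcases hb with hb | hb
    · exact hb.2 ha.2
    · exact hb.2 ha.1
  · show IsMaxIndep G (S ∩ T ∪ S \ T)
    rwa [Set.inter_union_diff]
  · show IsMaxIndep G (S ∩ T ∪ T \ S)
    rwa [Set.inter_comm, Set.inter_union_diff]

theorem no_generating_subgraph (G : SimpleGraph V)
    (h : ¬ ∃ X Y : Set V, Generating G X Y) :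
    (∀ w : V → ℝ, WWellCovered G w) ∧
    ∀ S T : Set V, IsMaxIndep G S → IsMaxIndep G T → S = T := by
  refine ⟨fun w S T hS hT => ?_, unique_max_indep G h⟩
  rw [unique_max_indep G h S T hS hT]
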